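/- Let s be an odd positive integer and let S = s + x·i + y·j + z·k be a primitive Lipschitz quaternion (gcd(s, x, y, z) = 1) with s^2 dividing normSq S. Then there exists X ∈ Quaternion ℤ with normSq X = s such that: (i) there exists S' ∈ Quaternion ℤ with S'.re = 1 and star X * S * X = (s^2 : ℤ) • S'; and (ii) for every Q ∈ Quaternion ℤ with Q.re = 1 such that s^2 divides normSq ((s : ℤ) • Q − S), there exists Q' ∈ Quaternion ℤ with Q'.re = 1 and star X * Q * X = (s : ℤ) • Q'. -/

import Mathlib

open Quaternion

def qmk {R : Type*} [CommRing R] (a b c d : R) : ℍ[R] := ⟨a, b, c, d⟩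

@[simp] lemma qlit_eq {R : Type*} [CommRing R] (a b c d : R) :
    (⟨a, b, c, d⟩ : ℍ[R]) = qmk a b c d := rfl
@[simp] lemma qmk_re {R : Type*} [CommRing R] (a b c d : R) : (qmk a b c d).re = a := rfl
@[simp] lemma qmk_imI {R : Type*} [CommRing R] (a b c d : R) : (qmk a b c d).imI = b := rfl
@[simp] lemma qmk_imJ {R : Type*} [CommRing R] (a b c d : R) : (qmk a b c d).imJ = c := rfl
@[simp] lemma qmk_imK {R : Type*} [CommRing R] (a b c d : R) : (qmk a b c d).imK = d := rfl

noncomputable def phi : ℍ[ℤ] →+* ℍ[ℚ] where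
  toFun q := ⟨(q.re : ℚ), (q.imI : ℚ), (q.imJ : ℚ), (q.imK : ℚ)⟩
  map_one' := by ext <;> simp
  map_mul' x y := by
    ext <;> simp [Quaternion.re_mul, Quaternion.imI_mul, Quaternion.imJ_mul, Quaternion.imK_mul] <;> push_cast <;> ring
  map_zero' := by ext <;> simp
  map_add' x y := by ext <;> push_cast <;> simp

@[simp] lemma phi_re (q : ℍ[ℤ]) : (phi q).re = (q.re : ℚ) := rfl
@[simp] lemma phi_imI (q : ℍ[ℤ]) : (phi q).imI = (q.imI : ℚ) := rfl
@[simp] lemma phi_imJ (q : ℍ[ℤ]) : (phi q).imJ = (q.imJ : ℚ) := rfl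
@[simp] lemma phi_imK (q : ℍ[ℤ]) : (phi q).imK = (q.imK : ℚ) := rfl

lemma phi_inj : Function.Injective phi := by
  intro a b h
  have h1 := congrArg QuaternionAlgebra.re h
  have h2 := congrArg QuaternionAlgebra.imI h
  have h3 := congrArg QuaternionAlgebra.imJ h
  have h4 := congrArg QuaternionAlgebra.imK h
  simp only [phi_re, phi_imI, phi_imJ, phi_imK, Int.cast_inj] at h1 h2 h3 h4
  ext <;> assumption

@[simp] lemma phi_star (q : ℍ[ℤ]) : phi (star q) = star (phi q) := by
  ext <;> simp [Quaternion.re_star, Quaternion.imI_star, Quaternion.imJ_star, Quaternion.imK_star]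

lemma phi_normSq (q : ℍ[ℤ]) : normSq (phi q) = ((Quaternion.normSq q : ℤ) : ℚ) := by
  simp only [Quaternion.normSq_def', phi_re, phi_imI, phi_imJ, phi_imK]; push_cast; ring

lemma phi_coe (n : ℤ) : phi ((n : ℤ) : ℍ[ℤ]) = ((n : ℚ) : ℍ[ℚ]) := by
  ext <;> simp

def omg : ℍ[ℚ] := ⟨1/2, 1/2, 1/2, 1/2⟩

def Hur (q : ℍ[ℚ]) : Prop := ∃ w : ℍ[ℤ], q = phi w ∨ q = phi w + omg

lemma hur_phi (w : ℍ[ℤ]) : Hur (phi w) := ⟨w, Or.inl rfl⟩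

lemma hur_add {a b : ℍ[ℚ]} (ha : Hur a) (hb : Hur b) : Hur (a + b) := by
  obtain ⟨w, hw | hw⟩ := ha <;> obtain ⟨v, hv | hv⟩ := hb <;> subst hw hv
  · exact ⟨w + v, Or.inl (by rw [map_add])⟩
  · exact ⟨w + v, Or.inr (by rw [map_add]; abel)⟩
  · exact ⟨w + v, Or.inr (by rw [map_add]; abel)⟩
  · refine ⟨w + v + ⟨1,1,1,1⟩, Or.inl ?_⟩
    rw [map_add phi (w + v) ⟨1,1,1,1⟩, map_add]
    have : omg + omg = phi ⟨1,1,1,1⟩ := by ext <;> simp [omg] <;> norm_num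
    rw [← this]; abel

lemma hur_neg {a : ℍ[ℚ]} (ha : Hur a) : Hur (-a) := by
  obtain ⟨w, hw | hw⟩ := ha <;> subst hw
  · exact ⟨-w, Or.inl (by rw [map_neg])⟩
  · refine ⟨-w - ⟨1,1,1,1⟩, Or.inr ?_⟩
    rw [map_sub phi (-w) ⟨1,1,1,1⟩, map_neg]
    have : phi ⟨1,1,1,1⟩ = omg + omg := by ext <;> simp [omg] <;> norm_num
    rw [this]; abel

lemma hur_mul_omg (w : ℍ[ℤ]) : Hur (phi w * omg) := by
  obtain ⟨m, hm⟩ | ⟨m, hm⟩ := Int.even_or_odd (w.re + w.imI + w.imJ + w.imK)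
  · refine ⟨⟨m - w.imI - w.imJ - w.imK, m - w.imK, m - w.imI, m - w.imJ⟩, Or.inl ?_⟩
    have h0 : w.re + w.imI + w.imJ + w.imK = 2 * m := by linarith
    have h : (w.re : ℚ) + w.imI + w.imJ + w.imK = 2 * m := by exact_mod_cast h0
    ext <;> simp [Quaternion.re_mul, Quaternion.imI_mul, Quaternion.imJ_mul, Quaternion.imK_mul, omg] <;>
      push_cast <;> linarith
  · refine ⟨⟨m - w.imI - w.imJ - w.imK, m - w.imK, m - w.imI, m - w.imJ⟩, Or.inr ?_⟩
    have h : (w.re : ℚ) + w.imI + w.imJ + w.imK = 2 * m + 1 := by exact_mod_cast hm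
    ext <;> simp [Quaternion.re_mul, Quaternion.imI_mul, Quaternion.imJ_mul, Quaternion.imK_mul, omg, Quaternion.re_add] <;>
      push_cast <;> linarith

lemma hur_omg_mul (w : ℍ[ℤ]) : Hur (omg * phi w) := by
  obtain ⟨m, hm⟩ | ⟨m, hm⟩ := Int.even_or_odd (w.re + w.imI + w.imJ + w.imK)
  · refine ⟨⟨m - w.imI - w.imJ - w.imK, m - w.imJ, m - w.imK, m - w.imI⟩, Or.inl ?_⟩
    have h0 : w.re + w.imI + w.imJ + w.imK = 2 * m := by linarith
    have h : (w.re : ℚ) + w.imI + w.imJ + w.imK = 2 * m := by exact_mod_cast h0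
    ext <;> simp [Quaternion.re_mul, Quaternion.imI_mul, Quaternion.imJ_mul, Quaternion.imK_mul, omg] <;>
      push_cast <;> linarith
  · refine ⟨⟨m - w.imI - w.imJ - w.imK, m - w.imJ, m - w.imK, m - w.imI⟩, Or.inr ?_⟩
    have h : (w.re : ℚ) + w.imI + w.imJ + w.imK = 2 * m + 1 := by exact_mod_cast hm
    ext <;> simp [Quaternion.re_mul, Quaternion.imI_mul, Quaternion.imJ_mul, Quaternion.imK_mul, omg] <;>
      push_cast <;> linarith

lemma omg_mul_omg : omg * omg = phi ⟨-1,0,0,0⟩ + omg := by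
  ext <;> simp [Quaternion.re_mul, Quaternion.imI_mul, Quaternion.imJ_mul, Quaternion.imK_mul, omg] <;> norm_num

lemma hur_mul {a b : ℍ[ℚ]} (ha : Hur a) (hb : Hur b) : Hur (a * b) := by
  obtain ⟨w, hw | hw⟩ := ha <;> obtain ⟨v, hv | hv⟩ := hb <;> subst hw hv
  · exact ⟨w * v, Or.inl (map_mul phi w v).symm⟩
  · rw [mul_add, ← map_mul]
    exact hur_add (hur_phi _) (hur_mul_omg w)
  · rw [add_mul, ← map_mul]
    exact hur_add (hur_phi _) (hur_omg_mul v)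
  · have : (phi w + omg) * (phi v + omg) = phi (w * v) + (phi w * omg + (omg * phi v + omg * omg)) := by
      rw [map_mul]; noncomm_ring
    rw [this]
    exact hur_add (hur_phi _) (hur_add (hur_mul_omg w) (hur_add (hur_omg_mul v)
      (omg_mul_omg ▸ hur_add (hur_phi _) ⟨0, Or.inr (by rw [map_zero, zero_add])⟩)))

lemma hur_star {a : ℍ[ℚ]} (ha : Hur a) : Hur (star a) := by
  obtain ⟨w, hw | hw⟩ := ha <;> subst hw
  · exact ⟨star w, Or.inl (by ext <;> simp)⟩
  · refine ⟨star w + ⟨0,-1,-1,-1⟩, Or.inr ?_⟩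
    rw [star_add, map_add phi (star w) ⟨0,-1,-1,-1⟩]
    have : star omg = phi ⟨0,-1,-1,-1⟩ + omg := by
      ext <;> simp [omg] <;> norm_num
    rw [this]
    have hsw : star (phi w) = phi (star w) := by ext <;> simp
    rw [hsw]; abel

lemma hur_two (q : ℍ[ℚ]) (h : Hur q) : ∃ w : ℍ[ℤ], q + q = phi w := by
  obtain ⟨w, hw | hw⟩ := h <;> subst hw
  · exact ⟨w + w, by rw [map_add]⟩
  · refine ⟨w + w + ⟨1,1,1,1⟩, ?_⟩
    rw [map_add phi (w + w) ⟨1,1,1,1⟩, map_add]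
    have : omg + omg = phi ⟨1,1,1,1⟩ := by ext <;> simp [omg] <;> norm_num
    rw [← this]; abel

lemma hur_normSq_int {q : ℍ[ℚ]} (h : Hur q) : ∃ n : ℤ, normSq q = (n : ℚ) := by
  obtain ⟨w, hw | hw⟩ := h <;> subst hw
  · exact ⟨Quaternion.normSq w, by simp only [Quaternion.normSq_def', phi_re, phi_imI, phi_imJ, phi_imK]; push_cast; ring⟩
  · refine ⟨Quaternion.normSq w + (w.re + w.imI + w.imJ + w.imK) + 1, ?_⟩
    simp only [Quaternion.normSq_def', Quaternion.re_add, Quaternion.imI_add, Quaternion.imJ_add,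
      Quaternion.imK_add, phi_re, phi_imI, phi_imJ, phi_imK, omg, qlit_eq, qmk_re, qmk_imI, qmk_imJ,
      qmk_imK]
    push_cast
    ring

lemma hur_iff (q : ℍ[ℚ]) : Hur q ↔ ∃ w : ℍ[ℤ], q = phi w ∨ q = phi w + omg := Iff.rfl

lemma omg_def : omg = (⟨1/2,1/2,1/2,1/2⟩ : ℍ[ℚ]) := rfl

lemma sq_quarter {x : ℚ} (h : x ^ 2 = 1/4) : x = 1/2 ∨ x = -(1/2) := by
  have : (x - 1/2) * (x + 1/2) = 0 := by nlinarith
  rcases mul_eq_zero.1 this with h | h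
  · left; linarith
  · right; linarith

lemma approx (q : ℍ[ℚ]) : ∃ c : ℍ[ℚ], Hur c ∧ normSq (q - c) < 1 := by
  set l : ℍ[ℤ] := ⟨round q.re, round q.imI, round q.imJ, round q.imK⟩ with hl
  set r : ℍ[ℚ] := q - phi l with hr
  have h1 : |r.re| ≤ 1/2 := by simpa [hr, hl] using abs_sub_round q.re
  have h2 : |r.imI| ≤ 1/2 := by simpa [hr, hl] using abs_sub_round q.imI
  have h3 : |r.imJ| ≤ 1/2 := by simpa [hr, hl] using abs_sub_round q.imJ
  have h4 : |r.imK| ≤ 1/2 := by simpa [hr, hl] using abs_sub_round q.imK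
  have s1 : r.re ^ 2 ≤ 1/4 := by nlinarith [abs_nonneg r.re, sq_abs r.re]
  have s2 : r.imI ^ 2 ≤ 1/4 := by nlinarith [abs_nonneg r.imI, sq_abs r.imI]
  have s3 : r.imJ ^ 2 ≤ 1/4 := by nlinarith [abs_nonneg r.imJ, sq_abs r.imJ]
  have s4 : r.imK ^ 2 ≤ 1/4 := by nlinarith [abs_nonneg r.imK, sq_abs r.imK]
  have hns : normSq r = r.re^2 + r.imI^2 + r.imJ^2 + r.imK^2 := Quaternion.normSq_def' r
  by_cases hlt : normSq r < 1
  · exact ⟨phi l, hur_phi l, hlt⟩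
  · push_neg at hlt
    have heq : normSq r = 1 := le_antisymm (by rw [hns]; linarith) hlt
    have hsum : r.re^2 + r.imI^2 + r.imJ^2 + r.imK^2 = 1 := by rw [← hns]; exact heq
    have e1 : r.re ^ 2 = 1/4 := by linarith
    have e2 : r.imI ^ 2 = 1/4 := by linarith
    have e3 : r.imJ ^ 2 = 1/4 := by linarith
    have e4 : r.imK ^ 2 = 1/4 := by linarith
    refine ⟨q, ?_, by simp⟩
    -- q = phi (l + l') + omg
    have : Hur r := by
      rw [hur_iff]
      refine ⟨⟨if r.re = 1/2 then 0 else -1, if r.imI = 1/2 then 0 else -1,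
        if r.imJ = 1/2 then 0 else -1, if r.imK = 1/2 then 0 else -1⟩, Or.inr ?_⟩
      ext
      · rcases sq_quarter e1 with h | h <;> simp [omg_def, h] <;> norm_num [h]
      · rcases sq_quarter e2 with h | h <;> simp [omg_def, h] <;> norm_num [h]
      · rcases sq_quarter e3 with h | h <;> simp [omg_def, h] <;> norm_num [h]
      · rcases sq_quarter e4 with h | h <;> simp [omg_def, h] <;> norm_num [h]
    have hq : q = phi l + r := by rw [hr]; abel
    rw [hq]; exact hur_add (hur_phi l) this

lemma division (a d : ℍ[ℚ]) (hd : d ≠ 0) :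
    ∃ c : ℍ[ℚ], Hur c ∧ normSq (a - d * c) < normSq d := by
  obtain ⟨c, hc, hlt⟩ := approx (d⁻¹ * a)
  refine ⟨c, hc, ?_⟩
  have : a - d * c = d * (d⁻¹ * a - c) := by
    rw [mul_sub, ← mul_assoc, mul_inv_cancel₀ hd, one_mul]
  rw [this, map_mul]
  have hpos : 0 < normSq d := lt_of_le_of_ne (Quaternion.normSq_nonneg) (Ne.symm (Quaternion.normSq_ne_zero.2 hd))
  calc normSq d * normSq (d⁻¹ * a - c) < normSq d * 1 := by
        apply mul_lt_mul_of_pos_left hlt hpos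
    _ = normSq d := mul_one _

def IdealMem (cS cs q : ℍ[ℚ]) : Prop := ∃ γ δ : ℍ[ℚ], Hur γ ∧ Hur δ ∧ q = cS * γ + cs * δ

lemma ideal_hur {cS cs q : ℍ[ℚ]} (hS : Hur cS) (hs : Hur cs) (h : IdealMem cS cs q) : Hur q := by
  obtain ⟨γ, δ, hγ, hδ, rfl⟩ := h
  exact hur_add (hur_mul hS hγ) (hur_mul hs hδ)

lemma ideal_sub {cS cs a b : ℍ[ℚ]} (ha : IdealMem cS cs a) (hb : IdealMem cS cs b) :
    IdealMem cS cs (a - b) := by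
  obtain ⟨γ, δ, hγ, hδ, rfl⟩ := ha
  obtain ⟨γ', δ', hγ', hδ', rfl⟩ := hb
  refine ⟨γ - γ', δ - δ', ?_, ?_, by noncomm_ring⟩
  · simpa [sub_eq_add_neg] using hur_add hγ (hur_neg hγ')
  · simpa [sub_eq_add_neg] using hur_add hδ (hur_neg hδ')

lemma ideal_mul_right {cS cs a : ℍ[ℚ]} (ha : IdealMem cS cs a) {h : ℍ[ℚ]} (hh : Hur h) :
    IdealMem cS cs (a * h) := by
  obtain ⟨γ, δ, hγ, hδ, rfl⟩ := ha
  exact ⟨γ * h, δ * h, hur_mul hγ hh, hur_mul hδ hh, by noncomm_ring⟩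

lemma exists_gen (cS cs : ℍ[ℚ]) (hS : Hur cS) (hs : Hur cs) (hne : cs ≠ 0) :
    ∃ X₀ : ℍ[ℚ], IdealMem cS cs X₀ ∧ X₀ ≠ 0 ∧
      ∀ a, IdealMem cS cs a → ∃ c, Hur c ∧ a = X₀ * c := by
  classical
  set P : ℕ → Prop := fun n => ∃ q, IdealMem cS cs q ∧ q ≠ 0 ∧ normSq q = (n : ℚ) with hP
  have hcs_mem : IdealMem cS cs cs := ⟨0, 1, by simpa [hur_iff] using ⟨0, Or.inl (by simp)⟩,
    by simpa [hur_iff] using ⟨1, Or.inl (by simp)⟩, by simp⟩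
  have hex : ∃ n, P n := by
    obtain ⟨m, hm⟩ := hur_normSq_int hs
    have hm0 : 0 ≤ m := by
      have := Quaternion.normSq_nonneg (a := cs)
      rw [hm] at this; exact_mod_cast this
    exact ⟨m.toNat, cs, hcs_mem, hne, by rw [hm]; congr 1; omega⟩
  obtain ⟨X₀, hXI, hX0, hXn⟩ := Nat.find_spec hex
  refine ⟨X₀, hXI, hX0, fun a ha => ?_⟩
  obtain ⟨c, hc, hlt⟩ := division a X₀ hX0
  set r := a - X₀ * c with hrdef
  have hrI : IdealMem cS cs r := ideal_sub ha (ideal_mul_right hXI hc)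
  by_cases hr0 : r = 0
  · refine ⟨c, hc, ?_⟩
    have : a - X₀ * c = 0 := hr0
    linear_combination (norm := noncomm_ring) this
  · exfalso
    obtain ⟨m, hm⟩ := hur_normSq_int (ideal_hur hS hs hrI)
    have hm0 : 0 ≤ m := by
      have := Quaternion.normSq_nonneg (a := r)
      rw [hm] at this; exact_mod_cast this
    have hmn : m.toNat < Nat.find hex := by
      have : (m : ℚ) < ((Nat.find hex : ℕ) : ℚ) := by rw [← hm, ← hXn]; exact hlt
      have : m < (Nat.find hex : ℤ) := by exact_mod_cast this
      omega
    exact Nat.find_min hex hmn ⟨r, hrI, hr0, by rw [hm]; congr 1; omega⟩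

-- helpers
lemma phi_inj' : Function.Injective phi := by
  intro a b h
  have h1 := congrArg QuaternionAlgebra.re h
  have h2 := congrArg QuaternionAlgebra.imI h
  have h3 := congrArg QuaternionAlgebra.imJ h
  have h4 := congrArg QuaternionAlgebra.imK h
  simp only [phi_re, phi_imI, phi_imJ, phi_imK, Int.cast_inj] at h1 h2 h3 h4
  ext <;> assumption

lemma qsmul_cancel {c : ℚ} (hc : c ≠ 0) {x y : ℍ[ℚ]} (h : c • x = c • y) : x = y := by
  have h1 := congrArg QuaternionAlgebra.re h
  have h2 := congrArg QuaternionAlgebra.imI h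
  have h3 := congrArg QuaternionAlgebra.imJ h
  have h4 := congrArg QuaternionAlgebra.imK h
  simp only [Quaternion.re_smul, Quaternion.imI_smul, Quaternion.imJ_smul, Quaternion.imK_smul,
    smul_eq_mul] at h1 h2 h3 h4
  ext <;> [exact mul_left_cancel₀ hc h1; exact mul_left_cancel₀ hc h2;
    exact mul_left_cancel₀ hc h3; exact mul_left_cancel₀ hc h4]

lemma zsmul_cancel {c : ℤ} (hc : c ≠ 0) {x y : ℍ[ℤ]} (h : c • x = c • y) : x = y := by
  have h1 := congrArg QuaternionAlgebra.re h
  have h2 := congrArg QuaternionAlgebra.imI h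
  have h3 := congrArg QuaternionAlgebra.imJ h
  have h4 := congrArg QuaternionAlgebra.imK h
  simp only [Quaternion.re_smul, Quaternion.imI_smul, Quaternion.imJ_smul, Quaternion.imK_smul,
    smul_eq_mul] at h1 h2 h3 h4
  ext <;> [exact mul_left_cancel₀ hc h1; exact mul_left_cancel₀ hc h2;
    exact mul_left_cancel₀ hc h3; exact mul_left_cancel₀ hc h4]

lemma odd_dvd_of_dvd_two_mul {t x : ℤ} (ht : Odd t) (h : t ∣ 2 * x) : t ∣ x := by
  obtain ⟨u, hu⟩ := ht
  have hcop : IsCoprime t 2 := ⟨1, -u, by linarith⟩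
  exact (IsCoprime.dvd_of_dvd_mul_left hcop h)

set_option maxHeartbeats 3000000 in
theorem key_X (s : ℤ) (hs : 0 < s) (hodd : Odd s)
    (S : ℍ[ℤ]) (hre : S.re = s)
    (hprim : Int.gcd (Int.gcd (Int.gcd S.re S.imI) S.imJ) S.imK = 1)
    (hdvd : s ^ 2 ∣ Quaternion.normSq S) :
    ∃ Y A α β : ℍ[ℤ], Quaternion.normSq Y = s ∧ S = Y * A ∧
      Y = S * α + (s : ℤ) • β := by
  set σ : ℍ[ℤ] := ((s : ℤ) : ℍ[ℤ]) with hσ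
  set cS : ℍ[ℚ] := phi S with hcS
  set cs : ℍ[ℚ] := phi σ with hcs
  have cs_star : star cs = cs := by
    ext <;> simp [hcs, hσ]
  have cs_mulr : ∀ x : ℍ[ℚ], x * cs = (s:ℚ) • x := by
    intro x
    ext <;> simp [hcs, hσ, Quaternion.re_mul, Quaternion.imI_mul, Quaternion.imJ_mul,
      Quaternion.imK_mul] <;> ring
  have cs_mull : ∀ x : ℍ[ℚ], cs * x = (s:ℚ) • x := by
    intro x
    ext <;> simp [hcs, hσ, Quaternion.re_mul, Quaternion.imI_mul, Quaternion.imJ_mul,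
      Quaternion.imK_mul] <;> ring
  have cs_normSq : normSq cs = (s:ℚ)^2 := by
    have h1 : Quaternion.normSq σ = s^2 := by
      rw [hσ]; simp [Quaternion.normSq_def']
    rw [hcs, phi_normSq, h1]; push_cast; ring
  have hcs_ne : cs ≠ 0 := by
    intro h
    rw [h, map_zero] at cs_normSq
    have : (s:ℚ) ≠ 0 := by exact_mod_cast hs.ne'
    exact this (by nlinarith [cs_normSq])
  obtain ⟨X₀, hXI, hX₀ne, hgen⟩ := exists_gen cS cs (hur_phi S) (hur_phi σ) hcs_ne
  obtain ⟨γ, δ, hγ, hδ, hX₀eq⟩ := hXI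
  have hur1 : Hur (1 : ℍ[ℚ]) := by rw [← map_one phi]; exact hur_phi 1
  have hur0 : Hur (0 : ℍ[ℚ]) := by rw [← map_zero phi]; exact hur_phi 0
  obtain ⟨A', hA'h, hA'⟩ := hgen cS ⟨1, 0, hur1, hur0, by simp⟩
  obtain ⟨B', hB'h, hB'⟩ := hgen cs ⟨0, 1, hur0, hur1, by simp⟩
  obtain ⟨nZ, hnZ⟩ := hur_normSq_int (ideal_hur (hur_phi S) (hur_phi σ) ⟨γ, δ, hγ, hδ, hX₀eq⟩)
  have hnZpos : 0 < nZ := by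
    have h0 : normSq X₀ ≠ 0 := Quaternion.normSq_ne_zero.2 hX₀ne
    have h1 : 0 ≤ normSq X₀ := Quaternion.normSq_nonneg
    rw [hnZ] at h0 h1
    have : (0:ℚ) < nZ := lt_of_le_of_ne h1 (Ne.symm h0)
    exact_mod_cast this
  obtain ⟨nγ, hnγ⟩ := hur_normSq_int hγ
  obtain ⟨nδ, hnδ⟩ := hur_normSq_int hδ
  obtain ⟨k, hk⟩ := hdvd
  have hsnZ : s ∣ nZ := by
    set w : ℍ[ℚ] := cS * γ * star δ with hw
    obtain ⟨W, hW⟩ := hur_two w (hur_mul (hur_mul (hur_phi S) hγ) (hur_star hδ))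
    have hexp : normSq X₀ = normSq (cS * γ) + normSq (cs * δ) + 2 * ((cS * γ) * star (cs * δ)).re := by
      rw [hX₀eq]; exact Quaternion.normSq_add _ _
    have hre1 : ((cS * γ) * star (cs * δ)).re = (s : ℚ) * w.re := by
      rw [star_mul, cs_star, ← mul_assoc, cs_mulr]
      simp only [Quaternion.re_smul, smul_eq_mul, hw]
    have hre2 : w.re + w.re = (W.re : ℚ) := by
      have := congrArg QuaternionAlgebra.re hW
      simpa using this
    have h1 : normSq (cS * γ) = ((Quaternion.normSq S : ℤ) : ℚ) * (nγ : ℚ) := by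
      rw [map_mul, hcS, phi_normSq, hnγ]
    have h2 : normSq (cs * δ) = (s : ℚ)^2 * (nδ : ℚ) := by
      rw [map_mul, cs_normSq, hnδ]
    have hq : (nZ : ℚ) = ((Quaternion.normSq S : ℤ) : ℚ) * nγ + (s:ℚ)^2 * nδ + (s:ℚ) * (W.re : ℚ) := by
      rw [← hnZ, hexp, h1, h2, hre1]
      push_cast
      linear_combination (s:ℚ) * hre2
    have hint : nZ = Quaternion.normSq S * nγ + s^2 * nδ + s * W.re := by exact_mod_cast hq
    exact ⟨s * k * nγ + s * nδ + W.re, by rw [hint, hk]; ring⟩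
  -- nZ ∣ s^2
  obtain ⟨nB, hnB⟩ := hur_normSq_int hB'h
  have hs2 : s^2 = nZ * nB := by
    have h' : normSq cs = normSq X₀ * normSq B' := by rw [hB', map_mul]
    rw [cs_normSq, hnZ, hnB] at h'
    exact_mod_cast h'
  obtain ⟨t, ht⟩ := hsnZ
  have htdvds : s = t * nB := by
    have h' : s * s = s * (t * nB) := by
      have : s^2 = (s*t) * nB := by rw [← ht, ← hs2]
      linarith [this]
    exact mul_left_cancel₀ hs.ne' h'
  have hstarX₀ : star X₀ = (t : ℚ) • B' := by
    have h1 : star X₀ * cs = ((nZ : ℚ)) • B' := by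
      rw [hB', ← mul_assoc, Quaternion.star_mul_self, hnZ, Quaternion.coe_mul_eq_smul]
    rw [cs_mulr] at h1
    have h2 : (s:ℚ) • star X₀ = (s:ℚ) • ((t:ℚ) • B') := by
      rw [h1, smul_smul]
      congr 1
      push_cast [ht]
      ring
    exact qsmul_cancel (by exact_mod_cast hs.ne') h2
  have hX₀t : X₀ = (t : ℚ) • star B' := by
    rw [← star_star X₀, hstarX₀]
    ext <;> simp
  have htodd : Odd t := by
    rcases Int.even_or_odd t with he | ho
    · exfalso
      have : Even s := htdvds ▸ he.mul_right nB
      exact (Int.not_odd_iff_even.2 this) hodd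
    · exact ho
  have htpos : 0 < t := by
    by_contra hle
    push_neg at hle
    have hnB0 : 0 ≤ nB := by
      have : (0:ℚ) ≤ normSq B' := Quaternion.normSq_nonneg
      rw [hnB] at this; exact_mod_cast this
    nlinarith [hnZpos, ht]
  -- t divides all components of S, hence t = 1
  have ht1 : t = 1 := by
    obtain ⟨G, hG⟩ := hur_two (star B' * A') (hur_mul (hur_star hB'h) hA'h)
    have hcs2 : cS + cS = (t:ℚ) • phi G := by
      have e1 : cS = (t:ℚ) • (star B' * A') := by
        rw [hA', hX₀t, smul_mul_assoc]
      rw [e1, ← smul_add, hG]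
    have hdre : t ∣ 2 * S.re := by
      have := congrArg QuaternionAlgebra.re hcs2
      simp only [Quaternion.re_add, Quaternion.re_smul, hcS, phi_re, smul_eq_mul] at this
      refine ⟨G.re, ?_⟩
      exact_mod_cast (by push_cast at this ⊢; linarith : ((2 * S.re : ℤ) : ℚ) = ((t * G.re : ℤ) : ℚ))
    have hdimI : t ∣ 2 * S.imI := by
      have := congrArg QuaternionAlgebra.imI hcs2
      simp only [Quaternion.imI_add, Quaternion.imI_smul, hcS, phi_imI, smul_eq_mul] at this
      refine ⟨G.imI, ?_⟩
      exact_mod_cast (by push_cast at this ⊢; linarith : ((2 * S.imI : ℤ) : ℚ) = ((t * G.imI : ℤ) : ℚ))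
    have hdimJ : t ∣ 2 * S.imJ := by
      have := congrArg QuaternionAlgebra.imJ hcs2
      simp only [Quaternion.imJ_add, Quaternion.imJ_smul, hcS, phi_imJ, smul_eq_mul] at this
      refine ⟨G.imJ, ?_⟩
      exact_mod_cast (by push_cast at this ⊢; linarith : ((2 * S.imJ : ℤ) : ℚ) = ((t * G.imJ : ℤ) : ℚ))
    have hdimK : t ∣ 2 * S.imK := by
      have := congrArg QuaternionAlgebra.imK hcs2
      simp only [Quaternion.imK_add, Quaternion.imK_smul, hcS, phi_imK, smul_eq_mul] at this
      refine ⟨G.imK, ?_⟩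
      exact_mod_cast (by push_cast at this ⊢; linarith : ((2 * S.imK : ℤ) : ℚ) = ((t * G.imK : ℤ) : ℚ))
    have d1 : t ∣ S.re := odd_dvd_of_dvd_two_mul htodd hdre
    have d2 : t ∣ S.imI := odd_dvd_of_dvd_two_mul htodd hdimI
    have d3 : t ∣ S.imJ := odd_dvd_of_dvd_two_mul htodd hdimJ
    have d4 : t ∣ S.imK := odd_dvd_of_dvd_two_mul htodd hdimK
    have : t ∣ (Int.gcd (Int.gcd (Int.gcd S.re S.imI) S.imJ) S.imK : ℤ) :=
      Int.dvd_coe_gcd (Int.dvd_coe_gcd (Int.dvd_coe_gcd d1 d2) d3) d4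
    rw [hprim] at this
    have := Int.le_of_dvd (by norm_num) this
    omega
  have hnZs : nZ = s := by rw [ht, ht1, mul_one]
  have hX₀norm : normSq X₀ = (s : ℚ) := by rw [hnZ, hnZs]
  -- unit fix: find Lipschitz Y and Hurwitz unit v with X₀ = phi Y * v
  obtain ⟨Y, v, hvH, hv1, hv2, hX0Y⟩ :
      ∃ (Y : ℍ[ℤ]) (v : ℍ[ℚ]), Hur v ∧ v * star v = 1 ∧ star v * v = 1 ∧ X₀ = phi Y * v := by
    rcases (hur_iff X₀).1 (ideal_hur (hur_phi S) (hur_phi σ) ⟨γ, δ, hγ, hδ, hX₀eq⟩) with ⟨w, hw | hw⟩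
    · exact ⟨w, 1, hur1, by simp, by simp, by rw [hw, mul_one]⟩
    · -- X₀ = phi w + omg, all doubled components odd
      set aq : ℍ[ℤ] := ⟨2*w.re+1, 2*w.imI+1, 2*w.imJ+1, 2*w.imK+1⟩ with haq
      have hphia : phi aq = X₀ + X₀ := by
        rw [hw]; ext <;> simp [haq, omg_def] <;> push_cast <;> ring
      have hoddc : ∀ x : ℤ, Odd x → ∃ ε : ℤ, (ε = 1 ∨ ε = -1) ∧ ∃ m : ℤ, x = ε + 4*m := by
        intro x hx
        obtain ⟨u, hu⟩ := hx
        by_cases h4 : x % 4 = 1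
        · exact ⟨1, Or.inl rfl, (x-1)/4, by omega⟩
        · exact ⟨-1, Or.inr rfl, (x+1)/4, by omega⟩
      obtain ⟨e0, he0, m0, hma⟩ := hoddc aq.re ⟨w.re, by rfl⟩
      obtain ⟨e1, he1, m1, hmb⟩ := hoddc aq.imI ⟨w.imI, by rfl⟩
      obtain ⟨e2, he2, m2, hmc⟩ := hoddc aq.imJ ⟨w.imJ, by rfl⟩
      obtain ⟨e3, he3, m3, hmd⟩ := hoddc aq.imK ⟨w.imK, by rfl⟩
      have hsq0 : e0 * e0 = 1 := by rcases he0 with h | h <;> rw [h] <;> norm_num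
      have hsq1 : e1 * e1 = 1 := by rcases he1 with h | h <;> rw [h] <;> norm_num
      have hsq2 : e2 * e2 = 1 := by rcases he2 with h | h <;> rw [h] <;> norm_num
      have hsq3 : e3 * e3 = 1 := by rcases he3 with h | h <;> rw [h] <;> norm_num
      set es : ℍ[ℤ] := ⟨e0, -e1, -e2, -e3⟩ with hes
      set P : ℍ[ℤ] := aq * es with hP
      have hd0 : P.re = 4 * (1 + m0*e0 + m1*e1 + m2*e2 + m3*e3) := by
        rw [hP]
        simp only [Quaternion.re_mul, hes, haq, qlit_eq, qmk_re, qmk_imI, qmk_imJ, qmk_imK]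
        linear_combination e0 * hma + e1 * hmb + e2 * hmc + e3 * hmd + hsq0 + hsq1 + hsq2 + hsq3
      have hd1 : P.imI = 4 * (-(m0*e1) + m1*e0 - m2*e3 + m3*e2) := by
        rw [hP]
        simp only [Quaternion.imI_mul, hes, haq, qlit_eq, qmk_re, qmk_imI, qmk_imJ, qmk_imK]
        linear_combination (-e1) * hma + e0 * hmb + (-e3) * hmc + e2 * hmd
      have hd2 : P.imJ = 4 * (-(m0*e2) + m1*e3 + m2*e0 - m3*e1) := by
        rw [hP]
        simp only [Quaternion.imJ_mul, hes, haq, qlit_eq, qmk_re, qmk_imI, qmk_imJ, qmk_imK]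
        linear_combination (-e2) * hma + e3 * hmb + e0 * hmc + (-e1) * hmd
      have hd3 : P.imK = 4 * (-(m0*e3) - m1*e2 + m2*e1 + m3*e0) := by
        rw [hP]
        simp only [Quaternion.imK_mul, hes, haq, qlit_eq, qmk_re, qmk_imI, qmk_imJ, qmk_imK]
        linear_combination (-e3) * hma + (-e2) * hmb + e1 * hmc + e0 * hmd
      set Y : ℍ[ℤ] := ⟨1 + m0*e0 + m1*e1 + m2*e2 + m3*e3,
        -(m0*e1) + m1*e0 - m2*e3 + m3*e2,
        -(m0*e2) + m1*e3 + m2*e0 - m3*e1,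
        -(m0*e3) - m1*e2 + m2*e1 + m3*e0⟩ with hY
      set v : ℍ[ℚ] := (1/2 : ℚ) • phi (⟨e0, e1, e2, e3⟩ : ℍ[ℤ]) with hv
      have hvH : Hur v := by
        rw [hur_iff]
        refine ⟨⟨(e0-1)/2, (e1-1)/2, (e2-1)/2, (e3-1)/2⟩, Or.inr ?_⟩
        ext
        · rcases he0 with h | h <;> rw [hv] <;> simp [omg_def, h] <;> norm_num
        · rcases he1 with h | h <;> rw [hv] <;> simp [omg_def, h] <;> norm_num
        · rcases he2 with h | h <;> rw [hv] <;> simp [omg_def, h] <;> norm_num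
        · rcases he3 with h | h <;> rw [hv] <;> simp [omg_def, h] <;> norm_num
      have hvnorm : normSq v = 1 := by
        rw [hv, Quaternion.normSq_smul, phi_normSq ⟨e0, e1, e2, e3⟩]
        have h4 : Quaternion.normSq (⟨e0, e1, e2, e3⟩ : ℍ[ℤ]) = 4 := by
          simp only [qlit_eq, Quaternion.normSq_def', qmk_re, qmk_imI, qmk_imJ, qmk_imK]
          nlinarith [hsq0, hsq1, hsq2, hsq3]
        rw [h4]
        norm_num
      have hv1' : v * star v = 1 := by
        have h' := Quaternion.self_mul_star (a := v)
        rw [hvnorm] at h'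
        simpa using h'
      have hv2' : star v * v = 1 := by
        have h' := Quaternion.star_mul_self (a := v)
        rw [hvnorm] at h'
        simpa using h'
      refine ⟨Y, v, hvH, hv1', hv2', ?_⟩
      have key : (4:ℚ) • phi Y = (4:ℚ) • (X₀ * star v) := by
        have e1' : phi P = phi aq * phi es := by rw [hP, map_mul]
        have e3' : phi es = star v + star v := by
          rw [hv]
          ext <;> simp [hes] <;> push_cast <;> ring
        have e4' : phi P = (4:ℚ) • phi Y := by
          ext <;> simp only [phi_re, phi_imI, phi_imJ, phi_imK, Quaternion.re_smul,
            Quaternion.imI_smul, Quaternion.imJ_smul, Quaternion.imK_smul, smul_eq_mul,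
            hd0, hd1, hd2, hd3, hY, qlit_eq, qmk_re, qmk_imI, qmk_imJ, qmk_imK] <;> push_cast <;> ring
        rw [← e4', e1', e3', hphia]
        rw [mul_add, add_mul]
        module
      have hYsv : phi Y = X₀ * star v :=
        qsmul_cancel (by norm_num : (4:ℚ) ≠ 0) key
      rw [hYsv, mul_assoc, hv2', mul_one]
  -- now derive the three z-level facts
  have hYq : phi Y = X₀ * star v := by rw [hX0Y, mul_assoc, hv1, mul_one]
  have hYnormq : normSq (phi Y) = (s:ℚ) := by
    rw [hYq, map_mul, hX₀norm]
    have : normSq (star v) = 1 := by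
      rw [Quaternion.normSq_star]
      have := Quaternion.self_mul_star (a := v)
      rw [hv1] at this
      have := congrArg QuaternionAlgebra.re this.symm
      simpa using this
    rw [this, mul_one]
  have hYnorm : Quaternion.normSq Y = s := by
    have := hYnormq
    rw [phi_normSq] at this
    exact_mod_cast this
  -- pull back A
  have hA''h : Hur (v * A') := hur_mul hvH hA'h
  have hcSY : cS = phi Y * (v * A') := by rw [hA', hX0Y, mul_assoc]
  have hsA : (s:ℚ) • (v * A') = phi (star Y * S) := by
    have h1 : phi (star Y * S) = star (phi Y) * cS := by rw [map_mul, phi_star, hcS]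
    rw [h1, hcSY, ← mul_assoc, Quaternion.star_mul_self, hYnormq, Quaternion.coe_mul_eq_smul]
  obtain ⟨G, hG⟩ := hur_two _ hA''h
  set c : ℍ[ℤ] := star Y * S with hc
  have h2c : c + c = s • G := by
    apply phi_inj'
    rw [map_add]
    have hphic : phi c = (s:ℚ) • (v * A') := hsA.symm
    rw [hphic, ← smul_add, hG]
    ext <;> simp only [phi_re, phi_imI, phi_imJ, phi_imK, Quaternion.re_smul,
      Quaternion.imI_smul, Quaternion.imJ_smul, Quaternion.imK_smul, smul_eq_mul] <;>
      push_cast <;> ring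
  have hdc0 : s ∣ c.re := odd_dvd_of_dvd_two_mul hodd
    ⟨G.re, by have := congrArg QuaternionAlgebra.re h2c; simp only [Quaternion.re_add,
      Quaternion.re_smul, smul_eq_mul] at this; linarith⟩
  have hdc1 : s ∣ c.imI := odd_dvd_of_dvd_two_mul hodd
    ⟨G.imI, by have := congrArg QuaternionAlgebra.imI h2c; simp only [Quaternion.imI_add,
      Quaternion.imI_smul, smul_eq_mul] at this; linarith⟩
  have hdc2 : s ∣ c.imJ := odd_dvd_of_dvd_two_mul hodd
    ⟨G.imJ, by have := congrArg QuaternionAlgebra.imJ h2c; simp only [Quaternion.imJ_add,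
      Quaternion.imJ_smul, smul_eq_mul] at this; linarith⟩
  have hdc3 : s ∣ c.imK := odd_dvd_of_dvd_two_mul hodd
    ⟨G.imK, by have := congrArg QuaternionAlgebra.imK h2c; simp only [Quaternion.imK_add,
      Quaternion.imK_smul, smul_eq_mul] at this; linarith⟩
  obtain ⟨a0, ha0⟩ := hdc0
  obtain ⟨a1, ha1⟩ := hdc1
  obtain ⟨a2, ha2⟩ := hdc2
  obtain ⟨a3, ha3⟩ := hdc3
  set A : ℍ[ℤ] := ⟨a0, a1, a2, a3⟩ with hAdef
  have hcA : c = s • A := by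
    ext <;> simp [hAdef, ha0, ha1, ha2, ha3]
  have hSYA : S = Y * A := by
    apply zsmul_cancel hs.ne'
    have h1 : Y * c = s • S := by
      rw [hc, ← mul_assoc, Quaternion.self_mul_star, hYnorm, Quaternion.coe_mul_eq_smul]
    rw [← h1, hcA, mul_smul_comm]
  -- pull back α, β
  obtain ⟨g, hg⟩ := hur_two _ (hur_mul hγ (hur_star hvH))
  obtain ⟨d, hd⟩ := hur_two _ (hur_mul hδ (hur_star hvH))
  have hYab2 : Y + Y = S * g + σ * d := by
    apply phi_inj'
    rw [map_add, map_add, map_mul, map_mul]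
    have hYq2 : phi Y = cS * (γ * star v) + cs * (δ * star v) := by
      rw [hYq, hX₀eq, add_mul, mul_assoc, mul_assoc]
    rw [hYq2, ← hg, ← hd, ← hcS, ← hcs]
    noncomm_ring
  obtain ⟨m, hm⟩ := hodd
  refine ⟨Y, A, (-m) • g, Y - m • d, hYnorm, hSYA, ?_⟩
  have hσd : σ * d = s • d := by rw [hσ]; exact Quaternion.coe_mul_eq_smul s d
  have hSg : S * g = Y + Y - s • d := by
    rw [eq_sub_iff_add_eq, ← hσd]
    exact hYab2.symm
  rw [mul_smul_comm, hSg, hm]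
  module


lemma hcoe (r : ℤ) : (Quaternion.coe r : ℍ[ℤ]) = r • (1 : ℍ[ℤ]) := by
  rw [← Quaternion.coe_mul_eq_smul, mul_one]

lemma re_comm (a b : ℍ[ℤ]) : (a * b).re = (b * a).re := by
  simp only [Quaternion.re_mul]; ring

/-- Key step of the lattice-embedding theorem in `ℝ³`: the rotation determined by a
quaternion GCD `X` (of norm `s`) carries the rational point represented by the
primitive quaternion `S` with odd scalar `s`, together with every lattice point at
integer squared distance from it, into the lattice. -/
theorem quaternion_gcd_embedding_step (s : ℤ) (hs : 0 < s) (hodd : Odd s)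
    (S : Quaternion ℤ) (hre : S.re = s)
    (hprim : Int.gcd (Int.gcd (Int.gcd S.re S.imI) S.imJ) S.imK = 1)
    (hdvd : s ^ 2 ∣ Quaternion.normSq S) :
    ∃ X : Quaternion ℤ, Quaternion.normSq X = s ∧
      (∃ S' : Quaternion ℤ, S'.re = 1 ∧ star X * S * X = (s ^ 2 : ℤ) • S') ∧
      (∀ Q : Quaternion ℤ, Q.re = 1 →
        s ^ 2 ∣ Quaternion.normSq ((s : ℤ) • Q - S) →
        ∃ Q' : Quaternion ℤ, Q'.re = 1 ∧ star X * Q * X = (s : ℤ) • Q') := by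
  obtain ⟨X, A, α, β, hXn, hSA, hXab⟩ := key_X s hs hodd S hre hprim hdvd
  obtain ⟨k, hk⟩ := hdvd
  have hst : star X * X = (Quaternion.coe s : ℍ[ℤ]) := by rw [Quaternion.star_mul_self, hXn]
  have hst2 : X * star X = (Quaternion.coe s : ℍ[ℤ]) := by rw [Quaternion.self_mul_star, hXn]
  have e1 : star X * S = (s : ℤ) • A := by
    rw [hSA, ← mul_assoc, hst, Quaternion.coe_mul_eq_smul]
  have hSS : S * S = (2*s) • S - (s^2*k) • (1 : ℍ[ℤ]) := by
    have h1 : star S * S = (s^2*k) • (1 : ℍ[ℤ]) := by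
      rw [Quaternion.star_mul_self, hk, hcoe]
    have h2 : (S + star S) * S = (2*s) • S := by
      rw [Quaternion.self_add_star', hre, Quaternion.coe_mul_eq_smul]
    calc S * S = (S + star S) * S - star S * S := by noncomm_ring
      _ = (2*s) • S - (s^2*k) • (1 : ℍ[ℤ]) := by rw [h2, h1]
  set S' : ℍ[ℤ] := (2:ℤ) • (A * α) - k • (star X * α) + A * β with hS'
  have hmain : star X * S * X = (s^2 : ℤ) • S' := by
    have st1 : star X * S * X = star X * S * (S * α + (s:ℤ) • β) := by rw [hXab]
    rw [st1, mul_add]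
    have t1 : star X * S * (S * α) = star X * (S * S) * α := by noncomm_ring
    have t2 : star X * S * ((s:ℤ) • β) = s • (star X * S * β) := by rw [mul_smul_comm]
    rw [t1, t2, hSS, e1]
    have t3 : star X * ((2*s) • S - (s^2*k) • (1:ℍ[ℤ])) * α
        = (2*s) • (star X * S * α) - (s^2*k) • (star X * α) := by
      rw [mul_sub, sub_mul, mul_smul_comm, mul_smul_comm, smul_mul_assoc, smul_mul_assoc, mul_one]
    rw [t3]
    have t4 : star X * S * α = ((s:ℤ) • A) * α := by rw [e1]
    rw [t4, hS']
    rw [smul_mul_assoc, smul_mul_assoc]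
    module
  have hre1 : (star X * S * X).re = s^2 := by
    have h1 : (star X * (S * X)).re = ((S * X) * star X).re := re_comm _ _
    have h2 : S * X * star X = S * (Quaternion.coe s : ℍ[ℤ]) := by rw [mul_assoc, hst2]
    rw [mul_assoc, h1, h2, Quaternion.mul_coe_eq_smul]
    simp [hre]
    ring
  have hS're : S'.re = 1 := by
    have h1 := congrArg QuaternionAlgebra.re hmain
    rw [hre1] at h1
    simp only [Quaternion.re_smul, smul_eq_mul] at h1
    have hs2 : s^2 ≠ 0 := pow_ne_zero 2 hs.ne'
    exact (mul_left_cancel₀ hs2 (by linarith : s^2 * 1 = s^2 * S'.re)).symm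
  refine ⟨X, hXn, ⟨S', hS're, hmain⟩, ?_⟩
  intro Q hQre hQdvd
  obtain ⟨j, hj⟩ := hQdvd
  set R : ℍ[ℤ] := (s:ℤ) • Q - S with hR
  have hRre : R.re = 0 := by
    rw [hR]
    simp [Quaternion.re_sub, Quaternion.re_smul, hre, hQre]
  have hstarR : star R = -R := by
    have h1 := Quaternion.self_add_star' (a := R)
    rw [hRre] at h1
    simp only [mul_zero, Quaternion.coe_zero] at h1
    exact (neg_eq_of_add_eq_zero_right h1).symm
  have hRR : R * R = -((s^2*j) • (1:ℍ[ℤ])) := by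
    have h1 : R * star R = (s^2*j) • (1:ℍ[ℤ]) := by
      rw [Quaternion.self_mul_star, hj, hcoe]
    rw [hstarR, mul_neg] at h1
    rw [← neg_neg (R*R), h1]
  set C : ℍ[ℤ] := star X * Q - A with hC
  have eC : star X * R = s • C := by
    rw [hR, mul_sub, mul_smul_comm, e1, hC, smul_sub]
  have hSd : S = (s:ℤ) • Q - R := by rw [hR]; abel
  have eRS : star X * (R * S) = (s^2:ℤ) • (C * Q) + (s^2*j) • star X := by
    have h1 : R * S = s • (R * Q) - R * R := by
      rw [hSd, mul_sub, mul_smul_comm]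
    have h2 : star X * (R * Q) = s • (C * Q) := by
      rw [← mul_assoc, eC, smul_mul_assoc]
    rw [h1, mul_sub, mul_smul_comm, h2, hRR, mul_neg, mul_smul_comm, mul_one]
    module
  set C' : ℍ[ℤ] := C * Q * α + j • (star X * α) + C * β with hC'
  have main2 : star X * R * X = (s^2 : ℤ) • C' := by
    have st1 : star X * R * X = star X * R * (S * α + (s:ℤ) • β) := by rw [hXab]
    rw [st1, mul_add]
    have t1 : star X * R * (S * α) = (star X * (R * S)) * α := by noncomm_ring
    have t2 : star X * R * ((s:ℤ) • β) = s • ((star X * R) * β) := by rw [mul_smul_comm]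
    rw [t1, t2, eRS, eC, hC']
    rw [add_mul, smul_mul_assoc, smul_mul_assoc, smul_mul_assoc]
    module
  have comb : s • (star X * Q * X) = s • ((s:ℤ) • (C' + S')) := by
    have hRS : R + S = (s:ℤ) • Q := by rw [hR]; abel
    calc s • (star X * Q * X) = star X * ((s:ℤ) • Q) * X := by
          rw [mul_smul_comm, smul_mul_assoc]
      _ = star X * (R + S) * X := by rw [hRS]
      _ = star X * R * X + star X * S * X := by noncomm_ring
      _ = (s^2:ℤ) • C' + (s^2:ℤ) • S' := by rw [main2, hmain]
      _ = s • ((s:ℤ) • (C' + S')) := by module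
  have hQX : star X * Q * X = (s:ℤ) • (C' + S') := zsmul_cancel hs.ne' comb
  have hre2 : (star X * Q * X).re = s := by
    have h1 : (star X * (Q * X)).re = ((Q * X) * star X).re := re_comm _ _
    have h2 : Q * X * star X = Q * (Quaternion.coe s : ℍ[ℤ]) := by rw [mul_assoc, hst2]
    rw [mul_assoc, h1, h2, Quaternion.mul_coe_eq_smul]
    simp [hQre]
  refine ⟨C' + S', ?_, hQX⟩
  have h1 := congrArg QuaternionAlgebra.re hQX
  rw [hre2] at h1
  simp only [Quaternion.re_smul, smul_eq_mul] at h1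
  exact (mul_left_cancel₀ hs.ne' (by linarith : s * 1 = s * (C' + S').re)).symm
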